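/- Lines and joins lemma: let Δ = Δ(P;μ) be a Minkowski complex for convex sets P_1,...,P_n ⊆ R^d containing 0, and let σ, τ ∈ Δ with σ ∪ τ ∈ Δ. If v ∈ R^d \ {0} and s, t are reals with μ + s·v ∈ P_σ and μ + t·v ∈ P_τ, then s and t have the same sign (st > 0, in particular neither is 0). -/

import Mathlib

open scoped Pointwise

lemma zero_mem_sum' {n d : ℕ} (P : Fin n → Set (Fin d → ℝ))
    (h0 : ∀ i, (0 : Fin d → ℝ) ∈ P i) (A : Finset (Fin n)) :
    (0 : Fin d → ℝ) ∈ ∑ i ∈ A, P i := by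
  classical
  induction A using Finset.induction with
  | empty => simp
  | @insert a s h ih =>
    rw [Finset.sum_insert h]
    exact ⟨0, h0 _, 0, ih, by simp⟩

lemma sum_subset_of_zero_mem {n d : ℕ} (P : Fin n → Set (Fin d → ℝ))
    (h0 : ∀ i, (0 : Fin d → ℝ) ∈ P i) {A B : Finset (Fin n)} (hAB : A ⊆ B) :
    (∑ i ∈ A, P i) ⊆ ∑ i ∈ B, P i := by
  have hB : B = A ∪ (B \ A) := by
    simp [Finset.union_sdiff_self_eq_union, Finset.union_eq_right.mpr hAB]
  rw [hB, Finset.sum_union (Finset.disjoint_sdiff)]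
  exact Set.subset_add_left _ (zero_mem_sum' P h0 _)

lemma convex_sum' {n d : ℕ} (P : Fin n → Set (Fin d → ℝ))
    (hconv : ∀ i, Convex ℝ (P i)) (A : Finset (Fin n)) :
    Convex ℝ (∑ i ∈ A, P i) := by
  classical
  induction A using Finset.induction with
  | empty => rw [Finset.sum_empty]; exact convex_singleton (𝕜 := ℝ) (0 : Fin d → ℝ)
  | @insert a s h ih =>
    rw [Finset.sum_insert h]
    exact (hconv _).add ih

/-- lines and joins.  If σ, τ and σ ∪ τ are faces of the Minkowski
complex Δ(P;μ) and μ + s•v ∈ P_σ, μ + t•v ∈ P_τ for some nonzero v, then s and t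
have the same (nonzero) sign. -/
theorem lines_and_joins (n d : ℕ) (P : Fin n → Set (Fin d → ℝ))
    (hconv : ∀ i, Convex ℝ (P i)) (h0 : ∀ i, (0 : Fin d → ℝ) ∈ P i)
    (μ : Fin d → ℝ) (σ τ : Finset (Fin n))
    (hσ : μ ∉ ∑ i ∈ σ, P i) (hτ : μ ∉ ∑ i ∈ τ, P i)
    (hστ : μ ∉ ∑ i ∈ σ ∪ τ, P i)
    (v : Fin d → ℝ) (hv : v ≠ 0) (s t : ℝ)
    (hs : μ + s • v ∈ ∑ i ∈ σ, P i) (ht : μ + t • v ∈ ∑ i ∈ τ, P i) :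
    s * t > 0 := by
  have hs0 : s ≠ 0 := by rintro rfl; simp at hs; exact hσ hs
  have ht0 : t ≠ 0 := by rintro rfl; simp at ht; exact hτ ht
  by_contra hcon
  have hst : s * t < 0 := lt_of_le_of_ne (not_lt.mp hcon) (mul_ne_zero hs0 ht0)
  have hQ : Convex ℝ (∑ i ∈ σ ∪ τ, P i) := convex_sum' P hconv _
  have hsQ : μ + s • v ∈ ∑ i ∈ σ ∪ τ, P i :=
    sum_subset_of_zero_mem P h0 Finset.subset_union_left hs
  have htQ : μ + t • v ∈ ∑ i ∈ σ ∪ τ, P i :=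
    sum_subset_of_zero_mem P h0 Finset.subset_union_right ht
  have hsigns : (s < 0 ∧ 0 < t) ∨ (0 < s ∧ t < 0) := by
    rcases lt_or_gt_of_ne hs0 with hsneg | hspos
    · left; exact ⟨hsneg, by nlinarith⟩
    · right; exact ⟨hspos, by nlinarith⟩
  have hsub : s - t ≠ 0 := by
    rcases hsigns with ⟨h1, h2⟩ | ⟨h1, h2⟩ <;> intro h <;> linarith
  have ha : (0:ℝ) ≤ -t / (s - t) := by
    rw [div_nonneg_iff]
    rcases hsigns with ⟨h1, h2⟩ | ⟨h1, h2⟩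
    · right; constructor <;> linarith
    · left; constructor <;> linarith
  have hb : (0:ℝ) ≤ s / (s - t) := by
    rw [div_nonneg_iff]
    rcases hsigns with ⟨h1, h2⟩ | ⟨h1, h2⟩
    · right; constructor <;> linarith
    · left; constructor <;> linarith
  have hab : (-t / (s - t)) + (s / (s - t)) = 1 := by
    rw [← add_div, div_eq_one_iff_eq hsub]; ring
  have hmem := hQ hsQ htQ ha hb hab
  apply hστ
  have heq : (-t / (s - t)) • (μ + s • v) + (s / (s - t)) • (μ + t • v) = μ := by
    match_scalars <;> field_simp <;> ring
  rwa [heq] at hmem
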